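/- Let a be a real number with B_0(a) > 0 and E_1(a) well defined (A_2(a)A_0(a) − A_1(a)² ≥ 0), and suppose D_0(z) ≠ 0 for all non-real z in some punctured neighborhood of a. Then F has a jump discontinuity across the real axis at a: the limit of F(z) as z → a with Im(z) > 0 equals (B_1(a) − i E_1(a)) / B_0(a), and the limit of F(z) as z → a with Im(z) < 0 equals (B_1(a) + i E_1(a)) / B_0(a). -/

import Mathlib

open Complex Finset Filter Topology Asymptotics

private lemma conj_comp_hasDerivAt {f : ℂ → ℂ} {d z : ℂ}
    (hf : HasDerivAt f d ((starRingEnd ℂ) z)) :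
    HasDerivAt (fun w => (starRingEnd ℂ) (f ((starRingEnd ℂ) w))) ((starRingEnd ℂ) d) z := by
  rw [hasDerivAt_iff_tendsto_slope] at hf ⊢
  have hconj : Tendsto (starRingEnd ℂ) (𝓝[≠] z) (𝓝[≠] ((starRingEnd ℂ) z)) := by
    apply tendsto_nhdsWithin_of_tendsto_nhds_of_eventually_within
    · exact (Complex.continuous_conj.tendsto z).mono_left nhdsWithin_le_nhds
    · filter_upwards [self_mem_nhdsWithin] with w hw
      simp only [Set.mem_compl_iff, Set.mem_singleton_iff] at hw ⊢
      exact fun h => hw ((starRingEnd ℂ).injective h)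
  have h2 := (Complex.continuous_conj.tendsto d).comp (hf.comp hconj)
  refine h2.congr fun w => ?_
  simp only [Function.comp_apply, slope_def_field, map_div₀, map_sub, Complex.conj_conj]

private lemma schwarz_refl {f : ℂ → ℂ} (hf : Differentiable ℂ f)
    (hre : ∀ x : ℝ, (f (x : ℂ)).im = 0) :
    ∀ z, (starRingEnd ℂ) (f z) = f ((starRingEnd ℂ) z) := by
  have hgdiff : Differentiable ℂ (fun w => (starRingEnd ℂ) (f ((starRingEnd ℂ) w))) :=
    fun w => (conj_comp_hasDerivAt ((hf _).hasDerivAt)).differentiableAt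
  have hfa : AnalyticOnNhd ℂ f Set.univ :=
    hf.differentiableOn.analyticOnNhd isOpen_univ
  have hga : AnalyticOnNhd ℂ (fun w => (starRingEnd ℂ) (f ((starRingEnd ℂ) w))) Set.univ :=
    hgdiff.differentiableOn.analyticOnNhd isOpen_univ
  have hseq : Tendsto (fun k : ℕ => ((((k : ℝ) + 1)⁻¹ : ℝ) : ℂ)) atTop (𝓝[≠] (0 : ℂ)) := by
    apply tendsto_nhdsWithin_of_tendsto_nhds_of_eventually_within
    · have : Tendsto (fun k : ℕ => (((k : ℝ) + 1)⁻¹ : ℝ)) atTop (𝓝 0) :=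
        tendsto_one_div_add_atTop_nhds_zero_nat.congr fun k => by rw [one_div]
      have := (Complex.continuous_ofReal.tendsto 0).comp this
      simpa [Function.comp_def] using this
    · filter_upwards [eventually_ge_atTop 0] with k _
      simp only [Set.mem_compl_iff, Set.mem_singleton_iff, Complex.ofReal_eq_zero]
      positivity
  have hfreq : ∃ᶠ w in 𝓝[≠] (0 : ℂ),
      (fun w => (starRingEnd ℂ) (f ((starRingEnd ℂ) w))) w = f w := by
    refine hseq.frequently (Frequently.of_forall fun k => ?_)
    show (starRingEnd ℂ) (f ((starRingEnd ℂ) ((((k : ℝ) + 1)⁻¹ : ℝ) : ℂ))) = _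
    rw [Complex.conj_ofReal, Complex.conj_eq_iff_im]
    exact hre _
  have := hga.eq_of_frequently_eq hfa hfreq
  intro z
  have h2 := congrFun this ((starRingEnd ℂ) z)
  simpa using h2

private lemma deriv_real_at_real {f : ℂ → ℂ} (hf : Differentiable ℂ f)
    (hre : ∀ x : ℝ, (f (x : ℂ)).im = 0) (a : ℝ) :
    (starRingEnd ℂ) (deriv f (a : ℂ)) = deriv f (a : ℂ) := by
  have hrefl := schwarz_refl hf hre
  have hg : (fun w => (starRingEnd ℂ) (f ((starRingEnd ℂ) w))) = f := by
    funext w; rw [hrefl, Complex.conj_conj]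
  have h1 : HasDerivAt (fun w => (starRingEnd ℂ) (f ((starRingEnd ℂ) w)))
      (starRingEnd ℂ (deriv f (starRingEnd ℂ (a : ℂ)))) (a : ℂ) :=
    conj_comp_hasDerivAt ((hf _).hasDerivAt)
  rw [hg] at h1
  have h2 := h1.deriv
  rw [Complex.conj_ofReal] at h2
  exact h2.symm


private lemma tendsto_slope_conj {f : ℂ → ℂ} (hf : Differentiable ℂ f) (a : ℝ) :
    Tendsto (fun z : ℂ => (f z - f ((starRingEnd ℂ) z)) / (z - (starRingEnd ℂ) z))
      (𝓝[{z : ℂ | z.im ≠ 0}] (a : ℂ)) (𝓝 (deriv f (a : ℂ))) := by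
  -- strict derivative
  obtain ⟨p, hp⟩ := hf.analyticAt (a : ℂ)
  have hs0 := hp.hasStrictDerivAt
  have hder : deriv f (a : ℂ) = p 1 fun _ => 1 := hs0.hasDerivAt.deriv
  rw [hder]
  set d := p 1 fun _ => 1 with hd
  have hs : HasStrictFDerivAt f (ContinuousLinearMap.smulRight (1 : ℂ →L[ℂ] ℂ) d) (a : ℂ) :=
    hasStrictDerivAt_iff_hasStrictFDerivAt.mp hs0
  have hlo := hs.isLittleO
  have hmap : Tendsto (fun z : ℂ => (z, (starRingEnd ℂ) z))
      (𝓝[{z : ℂ | z.im ≠ 0}] (a : ℂ)) (𝓝 ((a : ℂ), (a : ℂ))) := by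
    have h1 : Tendsto (fun z : ℂ => (z, (starRingEnd ℂ) z)) (𝓝 (a : ℂ))
        (𝓝 ((a : ℂ), (starRingEnd ℂ) (a : ℂ))) :=
      (continuous_id.prodMk Complex.continuous_conj).tendsto _
    rw [Complex.conj_ofReal] at h1
    exact h1.mono_left nhdsWithin_le_nhds
  have hcomp := hlo.comp_tendsto hmap
  have hdiv := hcomp.tendsto_div_nhds_zero
  have hne : ∀ᶠ z in 𝓝[{z : ℂ | z.im ≠ 0}] (a : ℂ), z - (starRingEnd ℂ) z ≠ 0 := by
    filter_upwards [self_mem_nhdsWithin] with z hz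
    rw [Complex.sub_conj]
    simp only [ne_eq, mul_eq_zero, Complex.ofReal_eq_zero, Complex.I_ne_zero, or_false]
    intro h
    rcases h with h | h
    · norm_num at h
    · exact hz h
  have heq : ∀ᶠ z in 𝓝[{z : ℂ | z.im ≠ 0}] (a : ℂ),
      ((fun p : ℂ × ℂ => f p.1 - f p.2 -
          (ContinuousLinearMap.smulRight (1 : ℂ →L[ℂ] ℂ) d) (p.1 - p.2)) ∘
        fun z : ℂ => (z, (starRingEnd ℂ) z)) z /
        (((fun p : ℂ × ℂ => p.1 - p.2) ∘ fun z : ℂ => (z, (starRingEnd ℂ) z)) z) + d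
      = (f z - f ((starRingEnd ℂ) z)) / (z - (starRingEnd ℂ) z) := by
    filter_upwards [hne] with z hz
    simp only [Function.comp_apply, ContinuousLinearMap.smulRight_apply,
      ContinuousLinearMap.one_apply, smul_eq_mul]
    field_simp
    ring
  have := (hdiv.add_const d).congr' heq
  simpa using this


private lemma master_sum {m : ℕ} (u v x y : Fin m → ℂ) :
    ∑ j, ∑ k, u j * v k * (x j * y k - x k * y j)
      = (∑ j, u j * x j) * (∑ k, v k * y k) - (∑ j, u j * y j) * (∑ k, v k * x k) := by
  rw [Finset.sum_mul_sum, Finset.sum_mul_sum, ← Finset.sum_sub_distrib]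
  refine Finset.sum_congr rfl fun j _ => ?_
  rw [← Finset.sum_sub_distrib]
  exact Finset.sum_congr rfl fun k _ => by ring

private lemma lagrange_id {m : ℕ} (x y : Fin m → ℂ) :
    ∑ j, ∑ k, (x j * y k - x k * y j) ^ 2
      = 2 * ((∑ j, x j ^ 2) * (∑ k, y k ^ 2) - (∑ j, x j * y j) ^ 2) := by
  have h1 := master_sum x y x y
  have h2 := master_sum y x x y
  have h3 : ∑ j, ∑ k, (x j * y k - x k * y j) ^ 2
      = (∑ j, ∑ k, x j * y k * (x j * y k - x k * y j))
        - ∑ j, ∑ k, y j * x k * (x j * y k - x k * y j) := by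
    rw [← Finset.sum_sub_distrib]
    refine Finset.sum_congr rfl fun j _ => ?_
    rw [← Finset.sum_sub_distrib]
    exact Finset.sum_congr rfl fun k _ => by ring
  have e1 : ∑ j, x j * x j = ∑ j, x j ^ 2 := Finset.sum_congr rfl fun j _ => (sq (x j)).symm
  have e2 : ∑ j, y j * y j = ∑ j, y j ^ 2 := Finset.sum_congr rfl fun j _ => (sq (y j)).symm
  have e3 : ∑ j, y j * x j = ∑ j, x j * y j := Finset.sum_congr rfl fun j _ => mul_comm _ _
  rw [h3, h1, h2, e1, e2, e3]
  ring

private lemma cs_sqrt {ι : Type*} (s : Finset ι) (F G : ι → ℝ)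
    (hF : ∀ i ∈ s, 0 ≤ F i) (hG : ∀ i ∈ s, 0 ≤ G i) :
    ∑ i ∈ s, F i * G i ≤ Real.sqrt (∑ i ∈ s, F i ^ 2) * Real.sqrt (∑ i ∈ s, G i ^ 2) := by
  have h1 := Finset.sum_mul_sq_le_sq_mul_sq s F G
  have h2 : 0 ≤ ∑ i ∈ s, F i * G i :=
    Finset.sum_nonneg fun i hi => mul_nonneg (hF i hi) (hG i hi)
  calc ∑ i ∈ s, F i * G i = Real.sqrt ((∑ i ∈ s, F i * G i) ^ 2) := (Real.sqrt_sq h2).symm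
    _ ≤ Real.sqrt ((∑ i ∈ s, F i ^ 2) * ∑ i ∈ s, G i ^ 2) := Real.sqrt_le_sqrt h1
    _ = _ := Real.sqrt_mul (Finset.sum_nonneg fun i _ => sq_nonneg _) _

private noncomputable def qf {m : ℕ} (f : Fin m → ℂ → ℂ) (j : Fin m) (z : ℂ) : ℂ :=
  (f j z - f j ((starRingEnd ℂ) z)) / (z - (starRingEnd ℂ) z)

private noncomputable def sgf {m : ℕ} (f : Fin m → ℂ → ℂ) (j k : Fin m) (z : ℂ) : ℂ :=
  qf f j z * f k z - qf f k z * f j z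

private noncomputable def Sf {m : ℕ} (f : Fin m → ℂ → ℂ) (z : ℂ) : ℂ := ∑ j, ∑ k, (sgf f j k z) ^ 2

private noncomputable def Tf {m : ℕ} (f : Fin m → ℂ → ℂ) (z : ℂ) : ℂ :=
  ∑ j, ∑ k, (starRingEnd ℂ) (f j z) * deriv (f k) z * sgf f j k z

private noncomputable def tuf {m : ℕ} (f : Fin m → ℂ → ℂ) (j k : Fin m) (z : ℂ) : ℂ :=
  (starRingEnd ℂ) (f j z) * deriv (f k) z - (starRingEnd ℂ) (f k z) * deriv (f j) z

private noncomputable def betaf {m : ℕ} (f : Fin m → ℂ → ℂ) (z : ℂ) : ℝ := Real.sqrt (2 * (Sf f z).re)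

private lemma core_identities {m : ℕ} (f : Fin m → ℂ → ℂ)
    (hrefl : ∀ j z, (starRingEnd ℂ) (f j z) = f j ((starRingEnd ℂ) z))
    (A0 A1 B1 : ℂ → ℂ) (B0 D0 : ℂ → ℝ) (F : ℂ → ℂ)
    (hA0 : ∀ z, A0 z = ∑ j, (f j z) ^ 2)
    (hA1 : ∀ z, A1 z = ∑ j, f j z * deriv (f j) z)
    (hB1 : ∀ z, B1 z = ∑ j, (starRingEnd ℂ) (f j z) * deriv (f j) z)
    (hB0 : ∀ z, B0 z = ∑ j, ‖f j z‖ ^ 2)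
    (hD0 : ∀ z, D0 z = Real.sqrt ((B0 z) ^ 2 - ‖A0 z‖ ^ 2))
    (hF : ∀ z, F z = (B1 z * (D0 z : ℂ) + (B0 z : ℂ) * B1 z - (starRingEnd ℂ) (A0 z) * A1 z)
        / ((B0 z : ℂ) * (D0 z : ℂ) + (B0 z : ℂ) ^ 2 - (starRingEnd ℂ) (A0 z) * A0 z))
    (s : ℝ) (hs : s = 1 ∨ s = -1)
    (z : ℂ) (hzim : 0 < s * z.im) (hzD : D0 z ≠ 0) (hzB : 0 < B0 z) :
    0 < (Sf f z).re ∧ D0 z = |z.im| * betaf f z ∧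
    ‖Tf f z‖ ≤ (1/2) * Real.sqrt ((Sf f z).re) *
        Real.sqrt (∑ j, ∑ k, ‖tuf f j k z‖ ^ 2) ∧
    F z = B1 z / (((B0 z + D0 z : ℝ)) : ℂ)
        + ((2 * s : ℝ) : ℂ) * I * Tf f z / (((betaf f z : ℝ) : ℂ) * (((B0 z + D0 z : ℝ)) : ℂ)) := by
  have hs1 : s * s = 1 := by rcases hs with h | h <;> rw [h] <;> norm_num
  have him : z.im ≠ 0 := by
    intro h; rw [h, mul_zero] at hzim; exact lt_irrefl 0 hzim
  have hzsub : z - (starRingEnd ℂ) z ≠ 0 := by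
    rw [Complex.sub_conj]
    simp only [ne_eq, mul_eq_zero, Complex.ofReal_eq_zero, Complex.I_ne_zero, or_false]
    intro h
    rcases h with h | h
    · norm_num at h
    · exact him h
  have habs : |z.im| = s * z.im := by
    rcases hs with h | h <;> subst h
    · rw [one_mul] at hzim ⊢; exact abs_of_pos hzim
    · have hlt : z.im < 0 := by nlinarith
      rw [abs_of_neg hlt]; ring
  have hy_ne : |z.im| ≠ 0 := by simpa using him
  have hqz : ∀ j, f j z - f j ((starRingEnd ℂ) z) = qf f j z * (z - (starRingEnd ℂ) z) := by
    intro j; simp only [qf]; exact (div_mul_cancel₀ _ hzsub).symm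
  have hqconj : ∀ j, (starRingEnd ℂ) (qf f j z) = qf f j z := by
    intro j
    simp only [qf]
    rw [map_div₀, map_sub, map_sub, hrefl j z, hrefl j ((starRingEnd ℂ) z), Complex.conj_conj,
      ← neg_sub (f j z), ← neg_sub z, neg_div_neg_eq]
  have hsgconj : ∀ j k, (starRingEnd ℂ) (sgf f j k z) = sgf f j k z := by
    intro j k
    simp only [sgf, map_sub, map_mul, hqconj, hrefl]
    linear_combination (qf f k z) * hqz j - (qf f j z) * hqz k
  have hsgim : ∀ j k, (sgf f j k z).im = 0 := fun j k => Complex.conj_eq_iff_im.mp (hsgconj j k)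
  have hSre : (Sf f z).re = ∑ j, ∑ k, ((sgf f j k z).re) ^ 2 := by
    simp only [Sf, Complex.re_sum]
    refine Finset.sum_congr rfl fun j _ => Finset.sum_congr rfl fun k _ => ?_
    rw [sq, sq, Complex.mul_re, hsgim j k]; ring
  have hB0C : ((B0 z : ℝ) : ℂ) = ∑ j, f j z * (starRingEnd ℂ) (f j z) := by
    rw [hB0 z]
    push_cast
    refine Finset.sum_congr rfl fun j _ => ?_
    rw [Complex.mul_conj, Complex.normSq_eq_norm_sq]
    push_cast; ring
  have hA0conj : (starRingEnd ℂ) (A0 z) = ∑ j, (f j ((starRingEnd ℂ) z)) ^ 2 := by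
    rw [hA0 z, map_sum]
    exact Finset.sum_congr rfl fun j _ => by rw [map_pow, hrefl]
  have habsA0 : ((‖A0 z‖ ^ 2 : ℝ) : ℂ) = A0 z * (starRingEnd ℂ) (A0 z) := by
    rw [Complex.mul_conj, Complex.normSq_eq_norm_sq]
  have hsgz : ∀ j k, f j z * f k ((starRingEnd ℂ) z) - f k z * f j ((starRingEnd ℂ) z)
      = sgf f j k z * (z - (starRingEnd ℂ) z) := by
    intro j k
    simp only [sgf]
    linear_combination (f k z) * hqz j - (f j z) * hqz k
  -- P1
  have hzz : (z - (starRingEnd ℂ) z) ^ 2 = -4 * ((z.im : ℝ) : ℂ) ^ 2 := by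
    rw [Complex.sub_conj, mul_pow, Complex.I_sq]; push_cast; ring
  have hc2 : ((2 * z.im ^ 2 : ℝ) : ℂ) = 2 * ((z.im : ℝ) : ℂ) ^ 2 := by push_cast; ring
  have hP1 : (((B0 z) ^ 2 - ‖A0 z‖ ^ 2 : ℝ) : ℂ)
      = ((2 * z.im ^ 2 : ℝ) : ℂ) * Sf f z := by
    have hlag := lagrange_id (fun j => f j z) (fun j => f j ((starRingEnd ℂ) z))
    have hL : ∑ j, ∑ k, (f j z * f k ((starRingEnd ℂ) z) - f k z * f j ((starRingEnd ℂ) z)) ^ 2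
        = (z - (starRingEnd ℂ) z) ^ 2 * Sf f z := by
      simp only [Sf, Finset.mul_sum]
      refine Finset.sum_congr rfl fun j _ => Finset.sum_congr rfl fun k _ => ?_
      rw [hsgz j k]; ring
    have hcast : (((B0 z) ^ 2 - ‖A0 z‖ ^ 2 : ℝ) : ℂ)
        = ((B0 z : ℝ) : ℂ) ^ 2 - ((‖A0 z‖ ^ 2 : ℝ) : ℂ) := by push_cast; ring
    rw [hcast, hB0C, habsA0, hA0conj, hA0 z]
    have hcc : ∑ j, f j z * (starRingEnd ℂ) (f j z) = ∑ j, f j z * f j ((starRingEnd ℂ) z) :=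
      Finset.sum_congr rfl fun j _ => by rw [hrefl]
    rw [hcc]
    linear_combination (1/2 : ℂ) * hlag - (1/2 : ℂ) * hL - (Sf f z / 2) * hzz - (Sf f z) * hc2
  have hP1re : (B0 z) ^ 2 - ‖A0 z‖ ^ 2 = 2 * z.im ^ 2 * (Sf f z).re := by
    have h := congrArg Complex.re hP1
    rw [Complex.ofReal_re, Complex.re_ofReal_mul] at h
    exact h
  have hSrepos : 0 < (Sf f z).re := by
    have hnn : 0 ≤ (Sf f z).re := by
      rw [hSre]
      exact Finset.sum_nonneg fun j _ => Finset.sum_nonneg fun k _ => sq_nonneg _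
    rcases hnn.lt_or_eq with h | h
    · exact h
    · exfalso; apply hzD
      rw [hD0 z, hP1re, ← h]
      simp
  have hβpos : 0 < betaf f z := by
    simp only [betaf]
    exact Real.sqrt_pos.mpr (by positivity)
  have hD0β : D0 z = |z.im| * betaf f z := by
    rw [hD0 z, hP1re, show 2 * z.im ^ 2 * (Sf f z).re = z.im ^ 2 * (2 * (Sf f z).re) by ring,
      Real.sqrt_mul (sq_nonneg _), Real.sqrt_sq_eq_abs]
    rfl
  have hD0nonneg : 0 ≤ D0 z := by rw [hD0 z]; exact Real.sqrt_nonneg _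
  -- the T bound
  have hP6 : (2 : ℂ) * Tf f z = ∑ j, ∑ k, sgf f j k z * tuf f j k z := by
    have hTswap : Tf f z = ∑ j, ∑ k, (starRingEnd ℂ) (f k z) * deriv (f j) z * sgf f k j z := by
      simp only [Tf]; rw [Finset.sum_comm]
    have h2T : (2 : ℂ) * Tf f z
        = Tf f z + ∑ j, ∑ k, (starRingEnd ℂ) (f k z) * deriv (f j) z * sgf f k j z := by
      rw [← hTswap]; ring
    rw [h2T]
    simp only [Tf]
    rw [← Finset.sum_add_distrib]
    refine Finset.sum_congr rfl fun j _ => ?_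
    rw [← Finset.sum_add_distrib]
    refine Finset.sum_congr rfl fun k _ => ?_
    simp only [sgf, tuf]; ring
  have habssg : ∀ j k, ‖sgf f j k z‖ = |(sgf f j k z).re| := by
    intro j k
    rw [Complex.norm_def, Complex.normSq_apply, hsgim j k, mul_zero, add_zero,
      Real.sqrt_mul_self_eq_abs]
  have hTbound : ‖Tf f z‖ ≤ (1/2) * Real.sqrt ((Sf f z).re) *
      Real.sqrt (∑ j, ∑ k, ‖tuf f j k z‖ ^ 2) := by
    have h1 : ‖(2 : ℂ) * Tf f z‖
        ≤ ∑ j, ∑ k, |(sgf f j k z).re| * ‖tuf f j k z‖ := by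
      rw [hP6]
      calc ‖∑ j, ∑ k, sgf f j k z * tuf f j k z‖
          ≤ ∑ j, ‖∑ k, sgf f j k z * tuf f j k z‖ := norm_sum_le _ _
        _ ≤ ∑ j, ∑ k, ‖sgf f j k z * tuf f j k z‖ :=
            Finset.sum_le_sum fun j _ => norm_sum_le _ _
        _ = ∑ j, ∑ k, |(sgf f j k z).re| * ‖tuf f j k z‖ := by
            refine Finset.sum_congr rfl fun j _ => Finset.sum_congr rfl fun k _ => ?_
            rw [norm_mul, habssg j k]
    have h2 : ∑ j, ∑ k, |(sgf f j k z).re| * ‖tuf f j k z‖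
        ≤ Real.sqrt ((Sf f z).re) * Real.sqrt (∑ j, ∑ k, ‖tuf f j k z‖ ^ 2) := by
      have hcs := cs_sqrt (univ : Finset (Fin m × Fin m))
          (fun p => |(sgf f p.1 p.2 z).re|) (fun p => ‖tuf f p.1 p.2 z‖)
          (fun i _ => abs_nonneg _) (fun i _ => norm_nonneg _)
      rw [Fintype.sum_prod_type] at hcs
      have e1 : ∑ p : Fin m × Fin m, |(sgf f p.1 p.2 z).re| ^ 2 = (Sf f z).re := by
        rw [Fintype.sum_prod_type, hSre]
        exact Finset.sum_congr rfl fun j _ => Finset.sum_congr rfl fun k _ => sq_abs _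
      have e2 : ∑ p : Fin m × Fin m, ‖tuf f p.1 p.2 z‖ ^ 2
          = ∑ j, ∑ k, ‖tuf f j k z‖ ^ 2 := Fintype.sum_prod_type _
      rw [e1, e2] at hcs
      exact hcs
    have h3 : ‖(2 : ℂ) * Tf f z‖ = 2 * ‖Tf f z‖ := by
      rw [norm_mul, Complex.norm_two]
    nlinarith [h1, h2, h3]
  refine ⟨hSrepos, hD0β, hTbound, ?_⟩
  -- the F formula
  have hB1C : B1 z = ∑ k, f k ((starRingEnd ℂ) z) * deriv (f k) z := by
    rw [hB1 z]; exact Finset.sum_congr rfl fun k _ => by rw [hrefl]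
  have hP5 : ((B0 z : ℝ) : ℂ) * B1 z - (starRingEnd ℂ) (A0 z) * A1 z
      = (z - (starRingEnd ℂ) z) * Tf f z := by
    rw [hB0C, hA0conj, hB1C, hA1 z]
    have hcc : ∑ j, f j z * (starRingEnd ℂ) (f j z) = ∑ j, f j z * f j ((starRingEnd ℂ) z) :=
      Finset.sum_congr rfl fun j _ => by rw [hrefl]
    rw [Finset.sum_mul_sum, Finset.sum_mul_sum]
    simp only [Tf, Finset.mul_sum]
    rw [← Finset.sum_sub_distrib]
    refine Finset.sum_congr rfl fun j _ => ?_
    rw [← Finset.sum_sub_distrib]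
    refine Finset.sum_congr rfl fun k _ => ?_
    rw [hrefl j z]
    linear_combination (f j ((starRingEnd ℂ) z) * deriv (f k) z) * hsgz j k
  have hdenom : ((B0 z : ℝ) : ℂ) * ((D0 z : ℝ) : ℂ) + ((B0 z : ℝ) : ℂ) ^ 2
      - (starRingEnd ℂ) (A0 z) * A0 z
      = ((D0 z : ℝ) : ℂ) * (((B0 z + D0 z : ℝ)) : ℂ) := by
    have h1 : (starRingEnd ℂ) (A0 z) * A0 z = ((‖A0 z‖ ^ 2 : ℝ) : ℂ) := by
      rw [habsA0]; ring
    have h2 : (D0 z) ^ 2 = (B0 z) ^ 2 - ‖A0 z‖ ^ 2 := by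
      rw [hD0 z]
      exact Real.sq_sqrt (by rw [hP1re]; positivity)
    have h2c := congrArg (fun r : ℝ => (r : ℂ)) h2
    push_cast at h2c
    rw [h1]
    push_cast
    linear_combination (-1 : ℂ) * h2c
  have hγpos : 0 < B0 z + D0 z := add_pos_of_pos_of_nonneg hzB hD0nonneg
  have hγne : (((B0 z + D0 z : ℝ)) : ℂ) ≠ 0 := Complex.ofReal_ne_zero.mpr (ne_of_gt hγpos)
  have hβne : ((betaf f z : ℝ) : ℂ) ≠ 0 := Complex.ofReal_ne_zero.mpr (ne_of_gt hβpos)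
  have hyne : ((|z.im| : ℝ) : ℂ) ≠ 0 := Complex.ofReal_ne_zero.mpr hy_ne
  have him2 : ((2 * z.im : ℝ) : ℂ) = ((2 * s * |z.im| : ℝ) : ℂ) := by
    have hr : (2 * z.im : ℝ) = 2 * s * |z.im| := by
      rw [habs]; linear_combination (-2 * z.im) * hs1
    rw [hr]
  rw [hF z, add_sub_assoc, hP5, hdenom, hD0β]
  have hzc : z - (starRingEnd ℂ) z = ((2 * z.im : ℝ) : ℂ) * I := Complex.sub_conj z
  rw [hzc, him2]
  push_cast
  have hγne' : ((B0 z : ℝ) : ℂ) + ((|z.im| : ℝ) : ℂ) * ((betaf f z : ℝ) : ℂ) ≠ 0 := by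
    rw [hD0β] at hγne; push_cast at hγne; exact hγne
  field_simp

/-- **Lemma 2 (Vanderbei).** The function `F` has a jump discontinuity across the real axis:
at a real point `a` (with `B₀(a) > 0`, `E₁(a)` well defined, and `D₀ ≠ 0` on nearby non-real
points), `F(z) → (B₁(a) − i E₁(a))/B₀(a)` as `z → a` from the upper half-plane and
`F(z) → (B₁(a) + i E₁(a))/B₀(a)` as `z → a` from the lower half-plane. -/
theorem F_jump_discontinuity
    {n : ℕ} (f : Fin (n + 1) → ℂ → ℂ)
    (hf_entire : ∀ j, Differentiable ℂ (f j))
    (hf_real : ∀ j, ∀ x : ℝ, (f j (x : ℂ)).im = 0)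
    (A0 A1 A2 B1 : ℂ → ℂ) (B0 D0 : ℂ → ℝ) (E1 : ℝ → ℝ) (F : ℂ → ℂ)
    (hA0 : ∀ z, A0 z = ∑ j, (f j z) ^ 2)
    (hA1 : ∀ z, A1 z = ∑ j, f j z * deriv (f j) z)
    (hA2 : ∀ z, A2 z = ∑ j, (deriv (f j) z) ^ 2)
    (hB1 : ∀ z, B1 z = ∑ j, (starRingEnd ℂ) (f j z) * deriv (f j) z)
    (hB0 : ∀ z, B0 z = ∑ j, ‖f j z‖ ^ 2)
    (hD0 : ∀ z, D0 z = Real.sqrt ((B0 z) ^ 2 - ‖A0 z‖ ^ 2))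
    (hE1 : ∀ x : ℝ, E1 x = Real.sqrt ((A2 (x : ℂ) * A0 (x : ℂ) - (A1 (x : ℂ)) ^ 2).re))
    (hF : ∀ z, F z = (B1 z * (D0 z : ℂ) + (B0 z : ℂ) * B1 z - (starRingEnd ℂ) (A0 z) * A1 z)
        / ((B0 z : ℂ) * (D0 z : ℂ) + (B0 z : ℂ) ^ 2 - (starRingEnd ℂ) (A0 z) * A0 z))
    (a : ℝ)
    (hB0a : 0 < B0 (a : ℂ))
    (hE1a : 0 ≤ (A2 (a : ℂ) * A0 (a : ℂ) - (A1 (a : ℂ)) ^ 2).re)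
    (hE1a' : (A2 (a : ℂ) * A0 (a : ℂ) - (A1 (a : ℂ)) ^ 2).im = 0)
    (hD0near : ∃ U ∈ 𝓝 (a : ℂ), ∀ z ∈ U, z.im ≠ 0 → D0 z ≠ 0) :
    Tendsto F (𝓝[{z : ℂ | 0 < z.im}] (a : ℂ))
        (𝓝 ((B1 (a : ℂ) - I * (E1 a : ℂ)) / (B0 (a : ℂ) : ℂ))) ∧
    Tendsto F (𝓝[{z : ℂ | z.im < 0}] (a : ℂ))
        (𝓝 ((B1 (a : ℂ) + I * (E1 a : ℂ)) / (B0 (a : ℂ) : ℂ))) := by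
  have hrefl : ∀ j z, (starRingEnd ℂ) (f j z) = f j ((starRingEnd ℂ) z) :=
    fun j => schwarz_refl (hf_entire j) (hf_real j)
  have hderiv_cont : ∀ j, Continuous (deriv (f j)) := by
    intro j
    have h1 : AnalyticOnNhd ℂ (deriv (f j)) Set.univ :=
      ((hf_entire j).differentiableOn.analyticOnNhd isOpen_univ).deriv
    exact continuous_iff_continuousAt.mpr fun z => (h1 z (Set.mem_univ z)).continuousAt
  have hfareal : ∀ j, (starRingEnd ℂ) (f j (a : ℂ)) = f j (a : ℂ) :=
    fun j => Complex.conj_eq_iff_im.mpr (hf_real j a)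
  have hdreal : ∀ j, (starRingEnd ℂ) (deriv (f j) (a : ℂ)) = deriv (f j) (a : ℂ) :=
    fun j => deriv_real_at_real (hf_entire j) (hf_real j) a
  set e := E1 a with hedef
  have he0 : 0 ≤ e := by rw [hedef, hE1 a]; exact Real.sqrt_nonneg _
  have hEcx : A2 (a : ℂ) * A0 (a : ℂ) - (A1 (a : ℂ)) ^ 2 = ((e ^ 2 : ℝ) : ℂ) := by
    apply Complex.ext
    · simp only [Complex.ofReal_re]
      rw [hedef, hE1 a]
      exact (Real.sq_sqrt hE1a).symm
    · simp only [Complex.ofReal_im]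
      exact hE1a'
  have hB0cont : Continuous B0 := by
    have hfe : B0 = fun z => ∑ j, ‖f j z‖ ^ 2 := funext hB0
    rw [hfe]
    exact continuous_finset_sum _ fun j _ =>
      (continuous_norm.comp (hf_entire j).continuous).pow 2
  have hB1cont : Continuous B1 := by
    have hfe : B1 = fun z => ∑ j, (starRingEnd ℂ) (f j z) * deriv (f j) z := funext hB1
    rw [hfe]
    exact continuous_finset_sum _ fun j _ =>
      ((Complex.continuous_conj.comp (hf_entire j).continuous).mul (hderiv_cont j))
  obtain ⟨U, hUnhds, hUD⟩ := hD0near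
  have hB0a_ne : ((B0 (a : ℂ) : ℝ) : ℂ) ≠ 0 := Complex.ofReal_ne_zero.mpr (ne_of_gt hB0a)
  have key : ∀ s : ℝ, s = 1 ∨ s = -1 → ∀ SS : Set ℂ, SS = {z : ℂ | 0 < s * z.im} →
      Tendsto F (𝓝[SS] (a : ℂ))
        (𝓝 ((B1 (a : ℂ) - (s : ℂ) * I * ((e : ℝ) : ℂ)) / ((B0 (a : ℂ) : ℝ) : ℂ))) := by
    intro s hs SS hSS
    set l := 𝓝[SS] (a : ℂ) with hldef
    have hmono : l ≤ 𝓝[{z : ℂ | z.im ≠ 0}] (a : ℂ) := by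
      rw [hldef, hSS]
      apply nhdsWithin_mono
      intro z hz
      simp only [Set.mem_setOf_eq] at hz ⊢
      intro h; rw [h, mul_zero] at hz; exact lt_irrefl 0 hz
    have hle : l ≤ 𝓝 (a : ℂ) := hldef ▸ nhdsWithin_le_nhds
    have hq_lim : ∀ j, Tendsto (fun z => qf f j z) l (𝓝 (deriv (f j) (a : ℂ))) := by
      intro j
      have := (tendsto_slope_conj (hf_entire j) a).mono_left hmono
      simpa only [qf] using this
    have hf_lim : ∀ j, Tendsto (fun z => f j z) l (𝓝 (f j (a : ℂ))) :=
      fun j => ((hf_entire j).continuous.tendsto _).mono_left hle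
    have hQ_lim : ∀ j, Tendsto (fun z => deriv (f j) z) l (𝓝 (deriv (f j) (a : ℂ))) :=
      fun j => ((hderiv_cont j).tendsto _).mono_left hle
    have hG_lim : ∀ j, Tendsto (fun z => (starRingEnd ℂ) (f j z)) l (𝓝 (f j (a : ℂ))) := by
      intro j
      have h1 : Tendsto (fun z => (starRingEnd ℂ) (f j z)) l
          (𝓝 ((starRingEnd ℂ) (f j (a : ℂ)))) :=
        (Complex.continuous_conj.tendsto _).comp (hf_lim j)
      rwa [hfareal j] at h1
    have hsg_lim : ∀ j k, Tendsto (fun z => sgf f j k z) l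
        (𝓝 (deriv (f j) (a : ℂ) * f k (a : ℂ) - deriv (f k) (a : ℂ) * f j (a : ℂ))) := by
      intro j k
      have := ((hq_lim j).mul (hf_lim k)).sub ((hq_lim k).mul (hf_lim j))
      simpa only [sgf] using this
    have hS_lim : Tendsto (fun z => Sf f z) l (𝓝 (2 * ((e ^ 2 : ℝ) : ℂ))) := by
    
      have h1 : Tendsto (fun z => Sf f z) l
          (𝓝 (∑ j, ∑ k, (deriv (f j) (a : ℂ) * f k (a : ℂ)
            - deriv (f k) (a : ℂ) * f j (a : ℂ)) ^ 2)) := by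
        have := tendsto_finset_sum (univ : Finset (Fin (n + 1))) fun j (_ : j ∈ univ) =>
          tendsto_finset_sum (univ : Finset (Fin (n + 1))) fun k (_ : k ∈ univ) =>
            (hsg_lim j k).pow 2
        simpa only [Sf] using this
      have h2 : ∑ j, ∑ k, (deriv (f j) (a : ℂ) * f k (a : ℂ)
            - deriv (f k) (a : ℂ) * f j (a : ℂ)) ^ 2 = 2 * ((e ^ 2 : ℝ) : ℂ) := by
        rw [lagrange_id (fun j => deriv (f j) (a : ℂ)) (fun j => f j (a : ℂ)), ← hEcx,
          hA2 (a : ℂ), hA0 (a : ℂ), hA1 (a : ℂ)]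
        have e3 : ∑ j, deriv (f j) (a : ℂ) * f j (a : ℂ)
            = ∑ j, f j (a : ℂ) * deriv (f j) (a : ℂ) :=
          Finset.sum_congr rfl fun j _ => mul_comm _ _
        rw [e3]
      rwa [h2] at h1
    have hT_lim : Tendsto (fun z => Tf f z) l (𝓝 (-((e ^ 2 : ℝ) : ℂ))) := by
      have h1 : Tendsto (fun z => Tf f z) l
          (𝓝 (∑ j, ∑ k, f j (a : ℂ) * deriv (f k) (a : ℂ) *
            (deriv (f j) (a : ℂ) * f k (a : ℂ) - deriv (f k) (a : ℂ) * f j (a : ℂ)))) := by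
        have := tendsto_finset_sum (univ : Finset (Fin (n + 1))) fun j (_ : j ∈ univ) =>
          tendsto_finset_sum (univ : Finset (Fin (n + 1))) fun k (_ : k ∈ univ) =>
            (((hG_lim j).mul (hQ_lim k)).mul (hsg_lim j k))
        simpa only [Tf] using this
      have h2 : ∑ j, ∑ k, f j (a : ℂ) * deriv (f k) (a : ℂ) *
            (deriv (f j) (a : ℂ) * f k (a : ℂ) - deriv (f k) (a : ℂ) * f j (a : ℂ))
          = -((e ^ 2 : ℝ) : ℂ) := by
        rw [master_sum (fun j => f j (a : ℂ)) (fun k => deriv (f k) (a : ℂ))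
          (fun j => deriv (f j) (a : ℂ)) (fun j => f j (a : ℂ))]
        have e1 : ∑ k, deriv (f k) (a : ℂ) * f k (a : ℂ)
            = ∑ k, f k (a : ℂ) * deriv (f k) (a : ℂ) :=
          Finset.sum_congr rfl fun k _ => mul_comm _ _
        have e2 : ∑ j, f j (a : ℂ) * f j (a : ℂ) = ∑ j, (f j (a : ℂ)) ^ 2 :=
          Finset.sum_congr rfl fun j _ => (sq _).symm
        have e4 : ∑ k, deriv (f k) (a : ℂ) * deriv (f k) (a : ℂ)
            = ∑ k, (deriv (f k) (a : ℂ)) ^ 2 :=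
          Finset.sum_congr rfl fun k _ => (sq _).symm
        rw [e1, e2, e4, ← hA0 (a : ℂ), ← hA1 (a : ℂ), ← hA2 (a : ℂ)]
        linear_combination (-1 : ℂ) * hEcx
      rwa [h2] at h1
    have hβ_lim : Tendsto (fun z => betaf f z) l (𝓝 (2 * e)) := by
      have h1 : Tendsto (fun z => 2 * (Sf f z).re) l (𝓝 (2 * (2 * ((e ^ 2 : ℝ) : ℂ)).re)) :=
        tendsto_const_nhds.mul ((Complex.continuous_re.tendsto _).comp hS_lim)
      have h2 := (Real.continuous_sqrt.tendsto _).comp h1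
      have h3 : Real.sqrt (2 * (2 * ((e ^ 2 : ℝ) : ℂ)).re) = 2 * e := by
        have h4 : (2 * ((e ^ 2 : ℝ) : ℂ)).re = 2 * e ^ 2 := by
          rw [show (2 : ℂ) * ((e ^ 2 : ℝ) : ℂ) = ((2 * e ^ 2 : ℝ) : ℂ) by push_cast; ring,
            Complex.ofReal_re]
        rw [h4, show (2 : ℝ) * (2 * e ^ 2) = (2 * e) ^ 2 by ring,
          Real.sqrt_sq (by positivity)]
      rw [h3] at h2
      simpa only [betaf, Function.comp_def] using h2
    have hyabs_lim : Tendsto (fun z : ℂ => |z.im|) l (𝓝 0) := by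
      have h1 : Tendsto (fun z : ℂ => |z.im|) (𝓝 (a : ℂ)) (𝓝 |(a : ℂ).im|) :=
        (continuous_abs.comp Complex.continuous_im).tendsto _
      have h2 : |(a : ℂ).im| = 0 := by simp
      rw [h2] at h1
      exact h1.mono_left hle
    have hB0_lim : Tendsto (fun z => B0 z) l (𝓝 (B0 (a : ℂ))) :=
      (hB0cont.tendsto _).mono_left hle
    have hB1_lim : Tendsto B1 l (𝓝 (B1 (a : ℂ))) := (hB1cont.tendsto _).mono_left hle
    have hevU : ∀ᶠ z in l, z ∈ U := hle hUnhds
    have hevS : ∀ᶠ z in l, 0 < s * z.im := by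
      rw [hldef, hSS]
      filter_upwards [self_mem_nhdsWithin] with z hz
      exact hz
    have hevB : ∀ᶠ z in l, 0 < B0 z := hB0_lim.eventually (eventually_gt_nhds hB0a)
    have hcore : ∀ᶠ z in l,
        0 < (Sf f z).re ∧ D0 z = |z.im| * betaf f z ∧
        ‖Tf f z‖ ≤ 1 / 2 * Real.sqrt ((Sf f z).re) *
          Real.sqrt (∑ j, ∑ k, ‖tuf f j k z‖ ^ 2) ∧
        F z = B1 z / (((B0 z + D0 z : ℝ)) : ℂ)
          + ((2 * s : ℝ) : ℂ) * I * Tf f z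
            / (((betaf f z : ℝ) : ℂ) * (((B0 z + D0 z : ℝ)) : ℂ)) := by
      filter_upwards [hevU, hevS, hevB] with z h1 h2 h3
      have him : z.im ≠ 0 := by intro h; rw [h, mul_zero] at h2; exact lt_irrefl 0 h2
      exact core_identities f hrefl A0 A1 B1 B0 D0 F hA0 hA1 hB1 hB0 hD0 hF s hs z h2
        (hUD z h1 him) h3
    have hD0_lim : Tendsto (fun z => D0 z) l (𝓝 0) := by
      have h1 : Tendsto (fun z => |z.im| * betaf f z) l (𝓝 (0 * (2 * e))) :=
        hyabs_lim.mul hβ_lim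
      rw [zero_mul] at h1
      exact h1.congr' (hcore.mono fun z hz => hz.2.1.symm)
    have hγ_lim : Tendsto (fun z => (((B0 z + D0 z : ℝ)) : ℂ)) l (𝓝 ((B0 (a : ℂ) : ℝ) : ℂ)) := by
      have h1 : Tendsto (fun z => B0 z + D0 z) l (𝓝 (B0 (a : ℂ) + 0)) := hB0_lim.add hD0_lim
      rw [add_zero] at h1
      exact (Complex.continuous_ofReal.tendsto _).comp h1
    have hterm1 : Tendsto (fun z => B1 z / (((B0 z + D0 z : ℝ)) : ℂ)) l
        (𝓝 (B1 (a : ℂ) / ((B0 (a : ℂ) : ℝ) : ℂ))) := hB1_lim.div hγ_lim hB0a_ne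
    have hFev : ∀ᶠ z in l, F z = B1 z / (((B0 z + D0 z : ℝ)) : ℂ)
        + ((2 * s : ℝ) : ℂ) * I * Tf f z
          / (((betaf f z : ℝ) : ℂ) * (((B0 z + D0 z : ℝ)) : ℂ)) :=
      hcore.mono fun z hz => hz.2.2.2
    rcases eq_or_lt_of_le he0 with he | he
    · -- e = 0 : second term tends to zero by squeezing
      have htu_lim : ∀ j k, Tendsto (fun z => tuf f j k z) l
          (𝓝 (f j (a : ℂ) * deriv (f k) (a : ℂ) - f k (a : ℂ) * deriv (f j) (a : ℂ))) := by
        intro j k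
        have := ((hG_lim j).mul (hQ_lim k)).sub ((hG_lim k).mul (hQ_lim j))
        simpa only [tuf] using this
      have hwcconj : ∀ j k : Fin (n + 1), (starRingEnd ℂ)
          (f j (a : ℂ) * deriv (f k) (a : ℂ) - f k (a : ℂ) * deriv (f j) (a : ℂ))
          = f j (a : ℂ) * deriv (f k) (a : ℂ) - f k (a : ℂ) * deriv (f j) (a : ℂ) := by
        intro j k
        rw [map_sub, map_mul, map_mul, hfareal, hfareal, hdreal, hdreal]
      have hwcim : ∀ j k : Fin (n + 1),
          (f j (a : ℂ) * deriv (f k) (a : ℂ) - f k (a : ℂ) * deriv (f j) (a : ℂ)).im = 0 :=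
        fun j k => Complex.conj_eq_iff_im.mp (hwcconj j k)
      have hQ0 : ∑ j, ∑ k, ‖f j (a : ℂ) * deriv (f k) (a : ℂ) - f k (a : ℂ) * deriv (f j) (a : ℂ)‖ ^ 2 = 0 := by
        have h6 : ∑ j, ∑ k, ‖f j (a : ℂ) * deriv (f k) (a : ℂ) - f k (a : ℂ) * deriv (f j) (a : ℂ)‖ ^ 2
            = (∑ j, ∑ k, (f j (a : ℂ) * deriv (f k) (a : ℂ)
              - f k (a : ℂ) * deriv (f j) (a : ℂ)) ^ 2).re := by
          rw [Complex.re_sum]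
          refine Finset.sum_congr rfl fun j _ => ?_
          rw [Complex.re_sum]
          refine Finset.sum_congr rfl fun k _ => ?_
          rw [Complex.sq_norm, Complex.normSq_apply, hwcim j k, sq, Complex.mul_re, hwcim j k]
          ring
        have h7 : ∑ j, ∑ k, (f j (a : ℂ) * deriv (f k) (a : ℂ)
            - f k (a : ℂ) * deriv (f j) (a : ℂ)) ^ 2 = 2 * ((e ^ 2 : ℝ) : ℂ) := by
          rw [lagrange_id (fun j => f j (a : ℂ)) (fun j => deriv (f j) (a : ℂ)), ← hEcx,
            hA2 (a : ℂ), hA0 (a : ℂ), hA1 (a : ℂ)]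
          ring
        rw [h6, h7, ← he]
        simp
      have hg_lim : Tendsto (fun z => Real.sqrt (∑ j, ∑ k, ‖tuf f j k z‖ ^ 2)
          / (B0 z + D0 z)) l (𝓝 0) := by
        have h1 : Tendsto (fun z => ∑ j, ∑ k, ‖tuf f j k z‖ ^ 2) l
            (𝓝 (∑ j, ∑ k, ‖f j (a : ℂ) * deriv (f k) (a : ℂ)
              - f k (a : ℂ) * deriv (f j) (a : ℂ)‖ ^ 2)) :=
          tendsto_finset_sum _ fun j _ => tendsto_finset_sum _ fun k _ =>
            ((continuous_norm.tendsto _).comp (htu_lim j k)).pow 2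
        rw [hQ0] at h1
        have h2 := (Real.continuous_sqrt.tendsto _).comp h1
        rw [Real.sqrt_zero] at h2
        have h3 : Tendsto (fun z => B0 z + D0 z) l (𝓝 (B0 (a : ℂ) + 0)) := hB0_lim.add hD0_lim
        rw [add_zero] at h3
        have h4 := h2.div h3 (ne_of_gt hB0a)
        rw [zero_div] at h4
        exact h4
      have hterm2 : Tendsto (fun z => ((2 * s : ℝ) : ℂ) * I * Tf f z
          / (((betaf f z : ℝ) : ℂ) * (((B0 z + D0 z : ℝ)) : ℂ))) l (𝓝 0) := by
        apply squeeze_zero_norm' ?_ hg_lim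
        filter_upwards [hcore, hevB] with z hz hB0z
        obtain ⟨hS, hD0b, hTb, _⟩ := hz
        have hβpos : 0 < betaf f z := by
          simp only [betaf]
          exact Real.sqrt_pos.mpr (by positivity)
        have hD0nn : 0 ≤ D0 z := by rw [hD0b]; positivity
        have hγpos : 0 < B0 z + D0 z := by linarith
        have habs2s : |2 * s| = 2 := by rcases hs with h | h <;> rw [h] <;> norm_num
        have hnorm : ‖((2 * s : ℝ) : ℂ) * I * Tf f z
            / (((betaf f z : ℝ) : ℂ) * (((B0 z + D0 z : ℝ)) : ℂ))‖
            = 2 * ‖Tf f z‖ / (betaf f z * (B0 z + D0 z)) := by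
          simp only [norm_div, norm_mul, Complex.norm_real, Real.norm_eq_abs,
            Complex.norm_I, mul_one, habs2s]
          rw [← abs_mul (2 : ℝ) s, habs2s]
          rw [abs_of_pos hβpos, abs_of_pos hγpos]
        rw [hnorm]
        set Q := Real.sqrt (∑ j, ∑ k, ‖tuf f j k z‖ ^ 2) with hQdef
        have hQnn : 0 ≤ Q := Real.sqrt_nonneg _
        have hβs : Real.sqrt ((Sf f z).re) ≤ betaf f z := by
          simp only [betaf]
          exact Real.sqrt_le_sqrt (by linarith)
        have hsnn : 0 ≤ Real.sqrt ((Sf f z).re) := Real.sqrt_nonneg _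
        have h5 : 2 * ‖Tf f z‖ ≤ betaf f z * Q := by nlinarith
        calc 2 * ‖Tf f z‖ / (betaf f z * (B0 z + D0 z))
            ≤ (betaf f z * Q) / (betaf f z * (B0 z + D0 z)) := by
              gcongr
          _ = Q / (B0 z + D0 z) := mul_div_mul_left _ _ (ne_of_gt hβpos)
      have hsum := hterm1.add hterm2
      rw [add_zero] at hsum
      have hval : B1 (a : ℂ) / ((B0 (a : ℂ) : ℝ) : ℂ)
          = (B1 (a : ℂ) - (s : ℂ) * I * ((e : ℝ) : ℂ)) / ((B0 (a : ℂ) : ℝ) : ℂ) := by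
        rw [← he]
        push_cast
        ring_nf
      rw [hval] at hsum
      exact hsum.congr' (hFev.mono fun z hz => hz.symm)
    · -- 0 < e
      have hterm2 : Tendsto (fun z => ((2 * s : ℝ) : ℂ) * I * Tf f z
          / (((betaf f z : ℝ) : ℂ) * (((B0 z + D0 z : ℝ)) : ℂ))) l
          (𝓝 (((2 * s : ℝ) : ℂ) * I * (-((e ^ 2 : ℝ) : ℂ))
            / (((2 * e : ℝ) : ℂ) * ((B0 (a : ℂ) : ℝ) : ℂ)))) := by
        apply Tendsto.div
        · exact tendsto_const_nhds.mul hT_lim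
        · have h1 : Tendsto (fun z => ((betaf f z : ℝ) : ℂ)) l (𝓝 ((2 * e : ℝ) : ℂ)) :=
            (Complex.continuous_ofReal.tendsto _).comp hβ_lim
          exact h1.mul hγ_lim
        · exact mul_ne_zero (Complex.ofReal_ne_zero.mpr (by positivity)) hB0a_ne
      have hsum := hterm1.add hterm2
      have hval : B1 (a : ℂ) / ((B0 (a : ℂ) : ℝ) : ℂ)
          + ((2 * s : ℝ) : ℂ) * I * (-((e ^ 2 : ℝ) : ℂ))
            / (((2 * e : ℝ) : ℂ) * ((B0 (a : ℂ) : ℝ) : ℂ))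
          = (B1 (a : ℂ) - (s : ℂ) * I * ((e : ℝ) : ℂ)) / ((B0 (a : ℂ) : ℝ) : ℂ) := by
        have hene : ((e : ℝ) : ℂ) ≠ 0 := Complex.ofReal_ne_zero.mpr (ne_of_gt he)
        push_cast
        field_simp
        ring
      rw [hval] at hsum
      exact hsum.congr' (hFev.mono fun z hz => hz.symm)
  constructor
  · have h := key 1 (Or.inl rfl) {z : ℂ | 0 < z.im} (by ext z; simp)
    simpa using h
  · have h := key (-1) (Or.inr rfl) {z : ℂ | z.im < 0} (by
      ext z
      simp only [Set.mem_setOf_eq, neg_mul, one_mul]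
      constructor <;> intro hz <;> linarith)
    convert h using 2
    push_cast
    ring
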